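/- (Second decomposition theorem) For any Markov chain with positive equilibrium P* and any probability distribution P, the velocity vector dP/dt of the Kolmogorov equation at P is a conic combination of the velocity vectors at P of two-state reversible chains A_i ⇌ A_j with the same equilibrium, i.e., of vectors of the form w(p_j/p*_j − p_i/p*_i)(e_i − e_j) with w ≥ 0. -/

import Mathlib

open Finset

noncomputable def prevv (F : Finset ℝ) (c : ℝ) : ℝ :=
  (insert (0:ℝ) (F.filter (· < c))).max' (insert_nonempty _ _)

lemma prevv_nonneg (F : Finset ℝ) (c : ℝ) : 0 ≤ prevv F c :=
  Finset.le_max' _ 0 (mem_insert_self _ _)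

lemma prevv_le (F : Finset ℝ) (c : ℝ) (hc : 0 ≤ c) : prevv F c ≤ c := by
  apply Finset.max'_le
  intro y hy
  rcases mem_insert.1 hy with h | h
  · exact h ▸ hc
  · exact (le_of_lt (mem_filter.1 h).2)

lemma max'_eq_of_eq {s t : Finset ℝ} (hs : s.Nonempty) (h : s = t) :
    s.max' hs = t.max' (h ▸ hs) := by subst h; rfl

lemma prevv_congr (F P : Finset ℝ) (c : ℝ) (h : F.filter (· < c) = P.filter (· < c)) :
    prevv F c = prevv P c :=
  max'_eq_of_eq _ (by rw [h])

lemma tele_aux : ∀ (m : ℕ) (P : Finset ℝ), P.card = m → (∀ c ∈ P, 0 ≤ c) →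
    ∀ x ∈ P, (∀ c ∈ P, c ≤ x) → ∑ c ∈ P, (c - prevv P c) = x := by
  intro m
  induction m with
  | zero =>
    intro P hc _ x hx _
    rw [Finset.card_eq_zero] at hc
    simp [hc] at hx
  | succ m ih =>
    intro P hcard hpos x hx hmax
    have hsplit : ∑ c ∈ P, (c - prevv P c)
        = (x - prevv P x) + ∑ c ∈ P.erase x, (c - prevv P c) :=
      (Finset.add_sum_erase P _ hx).symm
    have herase : ∀ c ∈ P.erase x, prevv P c = prevv (P.erase x) c := by
      intro c hc
      apply prevv_congr
      ext y
      simp only [mem_filter, mem_erase]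
      constructor
      · rintro ⟨hyP, hyc⟩
        have hcx : c < x := lt_of_le_of_ne (hmax c (mem_of_mem_erase hc)) (mem_erase.1 hc).1
        exact ⟨⟨ne_of_lt (hyc.trans hcx), hyP⟩, hyc⟩
      · rintro ⟨⟨_, hyP⟩, hyc⟩; exact ⟨hyP, hyc⟩
    rw [hsplit, Finset.sum_congr rfl (fun c hc => by rw [herase c hc])]
    by_cases hne : (P.erase x).Nonempty
    · have hcard' : (P.erase x).card = m := by
        rw [Finset.card_erase_of_mem hx, hcard]; rfl
      set x' := (P.erase x).max' hne with hx'def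
      have hx'mem : x' ∈ P.erase x := Finset.max'_mem _ hne
      have hsum : ∑ c ∈ P.erase x, (c - prevv (P.erase x) c) = x' :=
        ih (P.erase x) hcard' (fun c hc => hpos c (mem_of_mem_erase hc)) x' hx'mem
          (fun c hc => Finset.le_max' _ c hc)
      rw [hsum]
      have hfilter : P.filter (· < x) = P.erase x := by
        ext y
        simp only [mem_filter, mem_erase]
        constructor
        · rintro ⟨hyP, hyx⟩; exact ⟨ne_of_lt hyx, hyP⟩
        · rintro ⟨hyne, hyP⟩; exact ⟨hyP, lt_of_le_of_ne (hmax y hyP) hyne⟩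
      have hprev : prevv P x = x' := by
        have h1 : prevv P x = (insert (0:ℝ) (P.erase x)).max' (insert_nonempty _ _) :=
          max'_eq_of_eq _ (by rw [hfilter])
        rw [h1, Finset.max'_insert _ _ hne]
        exact max_eq_right (hpos x' (mem_of_mem_erase hx'mem))
      rw [hprev]; ring
    · rw [Finset.not_nonempty_iff_eq_empty] at hne
      rw [hne, Finset.sum_empty]
      have hfilter : P.filter (· < x) = ∅ := by
        ext y
        simp only [mem_filter, Finset.notMem_empty, iff_false, not_and]
        intro hyP
        have : y ∈ P.erase x ∨ y = x := by
          by_cases h : y = x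
          · exact Or.inr h
          · exact Or.inl (mem_erase.2 ⟨h, hyP⟩)
        rcases this with h | h
        · rw [hne] at h; simp at h
        · simp [h]
      have hprev : prevv P x = 0 := by
        have h1 : prevv P x = ({0} : Finset ℝ).max' (Finset.singleton_nonempty _) :=
          max'_eq_of_eq _ (by rw [hfilter]; rfl)
        rw [h1, Finset.max'_singleton]
      rw [hprev]; ring

lemma tele2 (F : Finset ℝ) (h0 : ∀ c ∈ F, 0 ≤ c) (x : ℝ) (hx : x ∈ F) :
    ∑ c ∈ F, (if c ≤ x then c - prevv F c else 0) = x := by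
  rw [← Finset.sum_filter]
  have hP : ∀ c ∈ F.filter (· ≤ x), prevv F c = prevv (F.filter (· ≤ x)) c := by
    intro c hc
    apply prevv_congr
    ext y
    simp only [mem_filter]
    constructor
    · rintro ⟨hyF, hyc⟩
      exact ⟨⟨hyF, le_of_lt (lt_of_lt_of_le hyc (mem_filter.1 hc).2)⟩, hyc⟩
    · rintro ⟨⟨hyF, _⟩, hyc⟩; exact ⟨hyF, hyc⟩
  rw [Finset.sum_congr rfl (fun c hc => by rw [hP c hc])]
  exact tele_aux _ _ rfl (fun c hc => h0 c (mem_filter.1 hc).1) x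
    (mem_filter.2 ⟨hx, le_refl x⟩) (fun c hc => (mem_filter.1 hc).2)
noncomputable def indf {n : ℕ} (f : Fin n → ℝ) (c : ℝ) (k : Fin n) : ℝ :=
  if c ≤ f k then 1 else 0

noncomputable def ddf {n : ℕ} (a : Fin n → Fin n → ℝ) (f : Fin n → ℝ) (c : ℝ) (i : Fin n) : ℝ :=
  ∑ m, a i m * indf f c m

noncomputable def ssf {n : ℕ} (a : Fin n → Fin n → ℝ) (f : Fin n → ℝ) (c : ℝ) (i : Fin n) : ℝ :=
  ∑ m, a i m * (1 - indf f c m)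

noncomputable def MMf {n : ℕ} (a : Fin n → Fin n → ℝ) (f : Fin n → ℝ) (c : ℝ) : ℝ :=
  ∑ k, indf f c k * ssf a f c k

noncomputable def flw {n : ℕ} (a : Fin n → Fin n → ℝ) (f : Fin n → ℝ) (c : ℝ) (i j : Fin n) : ℝ :=
  indf f c j * (1 - indf f c i) * (ddf a f c i * ssf a f c j / MMf a f c)

section flowfacts

variable {n : ℕ} (a : Fin n → Fin n → ℝ) (f : Fin n → ℝ)

lemma indf_nonneg (c : ℝ) (k : Fin n) : 0 ≤ indf f c k := by
  unfold indf; split_ifs <;> norm_num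

lemma indf_le_one (c : ℝ) (k : Fin n) : indf f c k ≤ 1 := by
  unfold indf; split_ifs <;> norm_num

lemma ddf_nonneg (ha : ∀ i j, 0 ≤ a i j) (c : ℝ) (i : Fin n) : 0 ≤ ddf a f c i :=
  Finset.sum_nonneg fun m _ => mul_nonneg (ha i m) (indf_nonneg f c m)

lemma ssf_nonneg (ha : ∀ i j, 0 ≤ a i j) (c : ℝ) (i : Fin n) : 0 ≤ ssf a f c i :=
  Finset.sum_nonneg fun m _ => mul_nonneg (ha i m) (by linarith [indf_le_one f c m])

lemma MMf_nonneg (ha : ∀ i j, 0 ≤ a i j) (c : ℝ) : 0 ≤ MMf a f c :=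
  Finset.sum_nonneg fun k _ => mul_nonneg (indf_nonneg f c k) (ssf_nonneg a f ha c k)

lemma flw_nonneg (ha : ∀ i j, 0 ≤ a i j) (c : ℝ) (i j : Fin n) : 0 ≤ flw a f c i j := by
  unfold flw
  apply mul_nonneg (mul_nonneg (indf_nonneg f c j) (by linarith [indf_le_one f c i]))
  apply div_nonneg (mul_nonneg (ddf_nonneg a f ha c i) (ssf_nonneg a f ha c j))
    (MMf_nonneg a f ha c)

lemma rowsplit (c : ℝ) (i : Fin n) : ddf a f c i + ssf a f c i = ∑ m, a i m := by
  unfold ddf ssf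
  rw [← Finset.sum_add_distrib]
  exact Finset.sum_congr rfl fun m _ => by ring

lemma cutlem (hbal : ∀ i, ∑ j, a i j = ∑ j, a j i) (c : ℝ) :
    MMf a f c = ∑ k, (1 - indf f c k) * ddf a f c k := by
  have h1 : ∑ k, ddf a f c k = ∑ k, indf f c k * (∑ m, a k m) := by
    unfold ddf
    rw [Finset.sum_comm]
    refine Finset.sum_congr rfl fun m _ => ?_
    rw [← Finset.sum_mul, ← hbal m, Finset.sum_mul, Finset.mul_sum]
    exact Finset.sum_congr rfl fun k _ => by ring
  have h2 : MMf a f c = ∑ k, indf f c k * (∑ m, a k m) - ∑ k, indf f c k * ddf a f c k := by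
    unfold MMf
    rw [← Finset.sum_sub_distrib]
    refine Finset.sum_congr rfl fun k _ => ?_
    rw [← rowsplit a f c k]; ring
  rw [h2, ← h1, ← Finset.sum_sub_distrib]
  exact Finset.sum_congr rfl fun k _ => by ring

lemma level (ha : ∀ i j, 0 ≤ a i j) (hbal : ∀ i, ∑ j, a i j = ∑ j, a j i) (c : ℝ) (l : Fin n) :
    ∑ j, a l j * (indf f c j - indf f c l)
      = ∑ j, flw a f c l j - ∑ j, flw a f c j l := by
  have hLHS : ∑ j, a l j * (indf f c j - indf f c l)
      = (1 - indf f c l) * ddf a f c l - indf f c l * ssf a f c l := by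
    have : ∑ j, a l j * (indf f c j - indf f c l)
        = ddf a f c l - indf f c l * (ddf a f c l + ssf a f c l) := by
      rw [rowsplit a f c l, Finset.mul_sum]
      unfold ddf
      rw [← Finset.sum_sub_distrib]
      exact Finset.sum_congr rfl fun j _ => by ring
    rw [this]; ring
  have hsum1 : ∑ j, flw a f c l j
      = (1 - indf f c l) * ddf a f c l / MMf a f c * MMf a f c := by
    unfold flw MMf
    rw [Finset.mul_sum]
    exact Finset.sum_congr rfl fun j _ => by ring
  have hsum2 : ∑ j, flw a f c j l
      = indf f c l * ssf a f c l / MMf a f c * MMf a f c := by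
    unfold flw
    rw [cutlem a f hbal c, Finset.mul_sum]
    exact Finset.sum_congr rfl fun j _ => by ring
  rw [hLHS, hsum1, hsum2]
  by_cases hM : MMf a f c = 0
  · have hterm1 : indf f c l * ssf a f c l = 0 := by
      have := (Finset.sum_eq_zero_iff_of_nonneg
        (fun k _ => mul_nonneg (indf_nonneg f c k) (ssf_nonneg a f ha c k))).1 hM l
        (Finset.mem_univ l)
      exact this
    have hMM' : ∑ k, (1 - indf f c k) * ddf a f c k = 0 := by
      rw [← cutlem a f hbal c]; exact hM
    have hterm2 : (1 - indf f c l) * ddf a f c l = 0 := by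
      exact (Finset.sum_eq_zero_iff_of_nonneg
        (fun k _ => mul_nonneg (by linarith [indf_le_one f c k]) (ddf_nonneg a f ha c k))).1
        hMM' l (Finset.mem_univ l)
    rw [hM, hterm1, hterm2]
    simp
  · rw [div_mul_cancel₀ _ hM, div_mul_cancel₀ _ hM]

end flowfacts
lemma pairsum {n : ℕ} (h : Fin n → Fin n → ℝ) (hanti : ∀ i j, h i j = - h j i) (l : Fin n) :
    ∑ i, ∑ j ∈ Finset.univ.filter (fun j => j < i),
      h i j * ((if l = i then (1:ℝ) else 0) - (if l = j then 1 else 0)) = ∑ j, h l j := by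
  have hll : h l l = 0 := by have := hanti l l; linarith
  have hsplit : ∀ i : Fin n, ∑ j ∈ Finset.univ.filter (fun j => j < i),
      h i j * ((if l = i then (1:ℝ) else 0) - (if l = j then 1 else 0))
      = (if l = i then ∑ j ∈ Finset.univ.filter (fun j => j < i), h i j else 0)
        - (if l < i then h i l else 0) := by
    intro i
    have e1 : ∀ j : Fin n, h i j * ((if l = i then (1:ℝ) else 0) - (if l = j then 1 else 0))
        = (if l = i then h i j else 0) - (if l = j then h i j else 0) := by
      intro j; split_ifs <;> ring
    rw [Finset.sum_congr rfl fun j _ => e1 j, Finset.sum_sub_distrib]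
    congr 1
    · split_ifs with hli <;> simp
    · rw [Finset.sum_ite_eq _ l (fun j => h i j)]
      simp only [Finset.mem_filter, Finset.mem_univ, true_and]
  rw [Finset.sum_congr rfl fun i _ => hsplit i, Finset.sum_sub_distrib]
  have e2 : ∑ i : Fin n, (if l = i then ∑ j ∈ Finset.univ.filter (fun j => j < i), h i j else 0)
      = ∑ j ∈ Finset.univ.filter (fun j => j < l), h l j := by
    rw [Finset.sum_ite_eq _ l (fun i => ∑ j ∈ Finset.univ.filter (fun j => j < i), h i j)]
    simp
  have e3 : ∑ i : Fin n, (if l < i then h i l else 0)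
      = ∑ i ∈ Finset.univ.filter (fun i => l < i), h i l := (Finset.sum_filter _ _).symm
  rw [e2, e3]
  have e4 : ∑ i ∈ Finset.univ.filter (fun i => l < i), h i l
      = - ∑ i ∈ Finset.univ.filter (fun i => l < i), h l i := by
    rw [← Finset.sum_neg_distrib]
    exact Finset.sum_congr rfl fun i _ => hanti i l
  rw [e4, sub_neg_eq_add]
  have e5 : Finset.univ.filter (fun j : Fin n => ¬ j < l)
      = insert l (Finset.univ.filter (fun j => l < j)) := by
    ext y
    simp only [Finset.mem_filter, Finset.mem_univ, true_and, Finset.mem_insert, not_lt]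
    constructor
    · intro hy
      rcases lt_or_eq_of_le hy with h' | h'
      · exact Or.inr h'
      · exact Or.inl h'.symm
    · rintro (rfl | h')
      · exact le_refl _
      · exact h'.le
  have e6 := Finset.sum_filter_add_sum_filter_not Finset.univ (fun j : Fin n => j < l) (h l)
  rw [e5, Finset.sum_insert (by simp), hll, zero_add] at e6
  linarith [e6]

theorem decomp_main {n : ℕ} (a : Fin n → Fin n → ℝ) (ha : ∀ i j, 0 ≤ a i j)
    (hbal : ∀ i, ∑ j, a i j = ∑ j, a j i)
    (f : Fin n → ℝ) (hf : ∀ i, 0 ≤ f i) :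
    ∃ w : Fin n → Fin n → ℝ, (∀ i j, 0 ≤ w i j) ∧
      ∀ l, ∑ j, a l j * (f j - f l)
        = ∑ i, ∑ j ∈ Finset.univ.filter (fun j => j < i),
            (w i j * (f j - f i)) * ((if l = i then (1:ℝ) else 0) - (if l = j then 1 else 0)) := by
  classical
  set F := Finset.image f Finset.univ with hF
  have hF0 : ∀ c ∈ F, (0:ℝ) ≤ c := by
    intro c hc
    obtain ⟨i, _, rfl⟩ := Finset.mem_image.1 hc
    exact hf i
  set G := fun i j => ∑ c ∈ F, (c - prevv F c) * flw a f c i j with hGdef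
  have hGnn : ∀ i j, 0 ≤ G i j := fun i j => Finset.sum_nonneg fun c hc =>
    mul_nonneg (sub_nonneg.2 (prevv_le F c (hF0 c hc))) (flw_nonneg a f ha c i j)
  have hGzero : ∀ i j, ¬ f i < f j → G i j = 0 := by
    intro i j hij
    apply Finset.sum_eq_zero
    intro c hc
    have hz : indf f c j * (1 - indf f c i) = 0 := by
      unfold indf
      split_ifs with h1 h2
      · ring
      · exact absurd (lt_of_lt_of_le (not_le.1 h2) h1) hij
      · ring
      · ring
    unfold flw
    rw [hz, zero_mul, mul_zero]
  have hft : ∀ k : Fin n, f k = ∑ c ∈ F, (c - prevv F c) * indf f c k := by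
    intro k
    have h1 := tele2 F hF0 (f k) (Finset.mem_image_of_mem f (Finset.mem_univ k))
    rw [← h1]
    apply Finset.sum_congr rfl
    intro c _
    unfold indf
    split_ifs <;> ring
  have hmain : ∀ l, ∑ j, a l j * (f j - f l) = ∑ j, G l j - ∑ j, G j l := by
    intro l
    have perj : ∀ j, a l j * (f j - f l)
        = ∑ c ∈ F, (c - prevv F c) * (a l j * (indf f c j - indf f c l)) := by
      intro j
      rw [hft j, hft l, ← Finset.sum_sub_distrib, Finset.mul_sum]
      exact Finset.sum_congr rfl fun c _ => by ring
    have hGsum1 : ∑ j, G l j = ∑ c ∈ F, (c - prevv F c) * (∑ j, flw a f c l j) := by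
      rw [Finset.sum_comm]
      exact Finset.sum_congr rfl fun c _ => by rw [Finset.mul_sum]
    have hGsum2 : ∑ j, G j l = ∑ c ∈ F, (c - prevv F c) * (∑ j, flw a f c j l) := by
      rw [Finset.sum_comm]
      exact Finset.sum_congr rfl fun c _ => by rw [Finset.mul_sum]
    calc ∑ j, a l j * (f j - f l)
        = ∑ j, ∑ c ∈ F, (c - prevv F c) * (a l j * (indf f c j - indf f c l)) :=
          Finset.sum_congr rfl fun j _ => perj j
      _ = ∑ c ∈ F, ∑ j, (c - prevv F c) * (a l j * (indf f c j - indf f c l)) :=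
          Finset.sum_comm
      _ = ∑ c ∈ F, (c - prevv F c) * (∑ j, flw a f c l j - ∑ j, flw a f c j l) := by
          refine Finset.sum_congr rfl fun c _ => ?_
          rw [← Finset.mul_sum, level a f ha hbal c l]
      _ = ∑ j, G l j - ∑ j, G j l := by
          rw [hGsum1, hGsum2, ← Finset.sum_sub_distrib]
          exact Finset.sum_congr rfl fun c _ => by ring
  refine ⟨fun i j => (G i j - G j i) / (f j - f i), ?_, ?_⟩
  · intro i j
    show 0 ≤ (G i j - G j i) / (f j - f i)
    rcases lt_trichotomy (f i) (f j) with h | h | h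
    · rw [hGzero j i (not_lt.2 h.le)]
      rw [sub_zero]
      exact div_nonneg (hGnn i j) (sub_nonneg.2 h.le)
    · rw [hGzero i j (by rw [h]; exact lt_irrefl _), hGzero j i (by rw [h]; exact lt_irrefl _)]
      simp
    · rw [hGzero i j (not_lt.2 h.le)]
      rw [zero_sub]
      exact div_nonneg_of_nonpos (neg_nonpos.2 (hGnn j i)) (by linarith)
  · intro l
    beta_reduce
    have hwmul : ∀ i j, (G i j - G j i) / (f j - f i) * (f j - f i) = G i j - G j i := by
      intro i j
      by_cases hij : f j = f i
      · have h1 : G i j = 0 := hGzero i j (by rw [hij]; exact lt_irrefl _)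
        have h2 : G j i = 0 := hGzero j i (by rw [hij]; exact lt_irrefl _)
        rw [h1, h2, sub_self, hij, sub_self, mul_zero]
      · exact div_mul_cancel₀ _ (sub_ne_zero.2 hij)
    have hrw : ∑ i, ∑ j ∈ Finset.univ.filter (fun j => j < i),
        ((G i j - G j i) / (f j - f i) * (f j - f i))
          * ((if l = i then (1:ℝ) else 0) - (if l = j then 1 else 0))
        = ∑ i, ∑ j ∈ Finset.univ.filter (fun j => j < i),
        (G i j - G j i) * ((if l = i then (1:ℝ) else 0) - (if l = j then 1 else 0)) :=
      Finset.sum_congr rfl fun i _ => Finset.sum_congr rfl fun j _ => by rw [hwmul i j]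
    rw [hrw, pairsum (fun i j => G i j - G j i) (fun i j => by ring) l, hmain l,
      Finset.sum_sub_distrib]
/-- **second decomposition theorem.** For any Markov chain with
positive equilibrium `P*` and any probability distribution `P`, the velocity
vector of the Kolmogorov equation at `P` is a conic combination of the velocity
vectors of two-state reversible chains `A_i ⇌ A_j` with the same equilibrium,
i.e. of vectors `w (p_j/p*_j − p_i/p*_i)(e_i − e_j)`, `w ≥ 0`. -/
theorem second_decomposition_theorem
    (n : ℕ) (ps : Fin n → ℝ) (hps : ∀ i, 0 < ps i)
    (q : Fin n → Fin n → ℝ)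
    (hq : ∀ i j, i ≠ j → 0 ≤ q i j) (hqd : ∀ i, q i i = 0)
    (hbal : ∀ i, ∑ j ∈ Finset.univ.erase i, q i j * ps j
        = (∑ j ∈ Finset.univ.erase i, q j i) * ps i)
    (p : Fin n → ℝ) (hp : ∀ i, 0 ≤ p i) (hp1 : ∑ i, p i = 1) :
    ∃ w : Fin n → Fin n → ℝ, (∀ i j, 0 ≤ w i j) ∧
      (fun i => ∑ j ∈ Finset.univ.erase i,
          q i j * ps j * (p j / ps j - p i / ps i))
        = ∑ i, ∑ j ∈ Finset.univ.filter (fun j => j < i),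
            (w i j * (p j / ps j - p i / ps i)) •
              (Pi.single i (1 : ℝ) - Pi.single j 1) := by
  classical
  have ha : ∀ i j, 0 ≤ q i j * ps j := by
    intro i j
    by_cases hij : i = j
    · subst hij; rw [hqd]; simp
    · exact mul_nonneg (hq i j hij) (hps j).le
  have hbal' : ∀ i, ∑ j, q i j * ps j = ∑ j, q j i * ps i := by
    intro i
    have h1 : ∑ j ∈ Finset.univ.erase i, q i j * ps j + q i i * ps i
        = ∑ j, q i j * ps j := Finset.sum_erase_add _ _ (Finset.mem_univ i)
    have h2 : ∑ j ∈ Finset.univ.erase i, q j i * ps i + q i i * ps i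
        = ∑ j, q j i * ps i := Finset.sum_erase_add _ _ (Finset.mem_univ i)
    have h3 : (∑ j ∈ Finset.univ.erase i, q j i) * ps i
        = ∑ j ∈ Finset.univ.erase i, q j i * ps i := Finset.sum_mul _ _ _
    rw [← h1, ← h2, hbal i, h3]
  have hf : ∀ i, 0 ≤ p i / ps i := fun i => div_nonneg (hp i) (hps i).le
  obtain ⟨w, hw, hkey⟩ := decomp_main (fun i j => q i j * ps j) ha hbal'
    (fun i => p i / ps i) hf
  refine ⟨w, hw, ?_⟩
  funext l
  have hL : ∑ j ∈ Finset.univ.erase l, q l j * ps j * (p j / ps j - p l / ps l)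
      = ∑ j, q l j * ps j * (p j / ps j - p l / ps l) :=
    Finset.sum_erase _ (by rw [sub_self, mul_zero])
  have hR : ((∑ i, ∑ j ∈ Finset.univ.filter (fun j => j < i),
        (w i j * (p j / ps j - p i / ps i)) •
          (Pi.single i (1 : ℝ) - Pi.single j 1) : Fin n → ℝ)) l
      = ∑ i, ∑ j ∈ Finset.univ.filter (fun j => j < i),
        (w i j * (p j / ps j - p i / ps i))
          * ((if l = i then (1:ℝ) else 0) - (if l = j then 1 else 0)) := by
    simp only [Finset.sum_apply, Pi.smul_apply, Pi.sub_apply, Pi.single_apply,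
      smul_eq_mul]
  beta_reduce
  rw [hR, hL]
  exact hkey l
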